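/- arXiv:math/0607211 — 3 statements merged into one kernel-verified Lean document; each statement's English description precedes it below -/
import Mathlib

section
/- For any finite sequence (word) in letters {1,2} with the Yamanouchi property and equal numbers of 1's and 2's, there exists exactly one perfect matching between positions labeled 1 and positions labeled 2 such that each 1 is matched to a later 2 and no two matched pairs nest (i.e., there are no matched pairs (a,b), (c,d) with a < c < d < b); this matching pairs the i-th 1 (in increasing position order) with the i-th 2. -/
/-- For any Yamanouchi word in letters {1,2} (encoded as `Fin 2`,
with `0` playing the role of the letter 1 and `1` the role of the letter 2)
with equal numbers of both letters, there is exactly one matching between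
positions labeled 1 and positions labeled 2 such that each 1 is matched to a
later 2 and no two matched pairs nest; moreover any such matching pairs the
i-th 1 (in increasing position order) with the i-th 2, i.e. it is strictly
order-preserving. -/
theorem unique_nonnesting_matching (n : ℕ) (w : Fin (2 * n) → Fin 2)
    (hYam : ∀ k : Fin (2 * n),
      (Finset.univ.filter fun i => i ≤ k ∧ w i = 1).card ≤
        (Finset.univ.filter fun i => i ≤ k ∧ w i = 0).card)
    (hcount0 : (Finset.univ.filter fun i => w i = 0).card = n)
    (hcount1 : (Finset.univ.filter fun i => w i = 1).card = n) :
    (∃! f : {i : Fin (2 * n) // w i = 0} ≃ {i : Fin (2 * n) // w i = 1},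
      (∀ a, a.1 < (f a).1) ∧
      ¬ ∃ a c : {i : Fin (2 * n) // w i = 0},
          a.1 < c.1 ∧ c.1 < (f c).1 ∧ (f c).1 < (f a).1) ∧
    (∀ f : {i : Fin (2 * n) // w i = 0} ≃ {i : Fin (2 * n) // w i = 1},
      ((∀ a, a.1 < (f a).1) ∧
        ¬ ∃ a c : {i : Fin (2 * n) // w i = 0},
            a.1 < c.1 ∧ c.1 < (f c).1 ∧ (f c).1 < (f a).1) →
      ∀ a c : {i : Fin (2 * n) // w i = 0}, a.1 < c.1 → (f a).1 < (f c).1) := by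
  classical
  -- Part 2: any good matching is strictly order-preserving.
  have part2 : ∀ f : {i : Fin (2 * n) // w i = 0} ≃ {i : Fin (2 * n) // w i = 1},
      ((∀ a, a.1 < (f a).1) ∧
        ¬ ∃ a c : {i : Fin (2 * n) // w i = 0},
            a.1 < c.1 ∧ c.1 < (f c).1 ∧ (f c).1 < (f a).1) →
      ∀ a c : {i : Fin (2 * n) // w i = 0}, a.1 < c.1 → (f a).1 < (f c).1 := by
    rintro f ⟨h1, h2⟩ a c hac
    rcases lt_trichotomy ((f a).1 : Fin (2 * n)) (f c).1 with h | h | h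
    · exact h
    · exfalso
      have : f a = f c := Subtype.ext h
      have : a = c := f.injective this
      exact absurd (congrArg Subtype.val this) (ne_of_lt hac)
    · exact absurd ⟨a, c, hac, h1 c, h⟩ h2
  have hcardA : Fintype.card {i : Fin (2 * n) // w i = 0} = n := by
    rw [Fintype.card_subtype]; exact hcount0
  have hcardB : Fintype.card {i : Fin (2 * n) // w i = 1} = n := by
    rw [Fintype.card_subtype]; exact hcount1
  set A := {i : Fin (2 * n) // w i = 0} with hA
  set B := {i : Fin (2 * n) // w i = 1} with hB
  let eA : Fin n ≃o A := Fintype.orderIsoFinOfCardEq A hcardA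
  let eB : Fin n ≃o B := Fintype.orderIsoFinOfCardEq B hcardB
  -- key: the i-th zero comes strictly before the i-th one
  have key : ∀ i : Fin n, (eA i).1 < (eB i).1 := by
    intro i
    set b : Fin (2 * n) := (eB i).1 with hb
    have claim1 : i.1 + 1 ≤ (Finset.univ.filter fun x => x ≤ b ∧ w x = 1).card := by
      have hsub : (Finset.Iic i).image (fun j => ((eB j : B) : Fin (2 * n))) ⊆
          Finset.univ.filter fun x => x ≤ b ∧ w x = 1 := by
        intro x hx
        simp only [Finset.mem_image, Finset.mem_Iic] at hx
        obtain ⟨j, hj, rfl⟩ := hx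
        refine Finset.mem_filter.2 ⟨Finset.mem_univ _, ?_, (eB j : B).2⟩
        exact Subtype.coe_le_coe.2 (eB.monotone hj)
      have hinj : Set.InjOn (fun j => ((eB j : B) : Fin (2 * n))) (Finset.Iic i) := by
        intro x _ y _ hxy
        exact eB.injective (Subtype.ext hxy)
      calc i.1 + 1 = (Finset.Iic i).card := (Fin.card_Iic i).symm
        _ = ((Finset.Iic i).image (fun j => ((eB j : B) : Fin (2 * n)))).card :=
            (Finset.card_image_of_injOn hinj).symm
        _ ≤ _ := Finset.card_le_card hsub
    have hle : (eA i).1 ≤ b := by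
      by_contra hcon
      push_neg at hcon
      have hsub : (Finset.univ.filter fun x => x ≤ b ∧ w x = 0) ⊆
          (Finset.Iio i).image (fun j => ((eA j : A) : Fin (2 * n))) := by
        intro x hx
        obtain ⟨-, hxb, hx0⟩ := Finset.mem_filter.1 hx
        refine Finset.mem_image.2 ⟨eA.symm ⟨x, hx0⟩, ?_, ?_⟩
        · rw [Finset.mem_Iio]
          have : (eA (eA.symm ⟨x, hx0⟩) : A) < eA i := by
            rw [eA.apply_symm_apply]
            exact Subtype.coe_lt_coe.1 (lt_of_le_of_lt hxb hcon)
          exact eA.lt_iff_lt.1 this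
        · rw [eA.apply_symm_apply]
      have hcard : (Finset.univ.filter fun x => x ≤ b ∧ w x = 0).card ≤ i.1 := by
        calc _ ≤ ((Finset.Iio i).image (fun j => ((eA j : A) : Fin (2 * n)))).card :=
              Finset.card_le_card hsub
          _ ≤ (Finset.Iio i).card := Finset.card_image_le
          _ = i.1 := Fin.card_Iio i
      have := le_trans claim1 (le_trans (hYam b) hcard)
      omega
    refine lt_of_le_of_ne hle ?_
    intro heq
    have h0 : w ((eA i : A) : Fin (2 * n)) = 0 := (eA i : A).2
    have h1 : w b = 1 := (eB i : B).2
    rw [heq, h1] at h0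
    exact absurd h0 (by decide)
  -- the canonical matching
  let fIso : A ≃o B := eA.symm.trans eB
  have hfprop : (∀ a : A, (a : Fin (2 * n)) < (fIso.toEquiv a : Fin (2 * n))) ∧
      ¬ ∃ a c : A, (a : Fin (2 * n)) < c ∧ (c : Fin (2 * n)) < fIso.toEquiv c ∧
        ((fIso.toEquiv c : B) : Fin (2 * n)) < fIso.toEquiv a := by
    constructor
    · intro a
      have := key (eA.symm a)
      rwa [eA.apply_symm_apply] at this
    · rintro ⟨a, c, hac, -, hlt⟩
      have h1 : a < c := Subtype.coe_lt_coe.1 hac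
      have h2 : fIso a < fIso c := fIso.strictMono h1
      exact absurd (Subtype.coe_lt_coe.2 h2) (not_lt.2 (le_of_lt hlt))
  refine ⟨⟨fIso.toEquiv, hfprop, ?_⟩, part2⟩
  intro g hg
  -- g is strictly monotone, hence an order iso, hence equal to fIso by uniqueness
  have hgmono : StrictMono g := by
    intro a c h
    exact Subtype.coe_lt_coe.1 (part2 g hg a c (Subtype.coe_lt_coe.2 h))
  let gIso : A ≃o B :=
    { toEquiv := g, map_rel_iff' := fun {a c} => hgmono.le_iff_le }
  have : gIso = fIso := Subsingleton.elim _ _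
  exact Equiv.ext fun a => congrFun (congrArg (fun (e : A ≃o B) => (e : A → B)) this) a
end

section
/- Let X be a 2 × n matrix over an infinite field with all 2×2 minors P_{ij} (i < j). Define a monomial in Plücker coordinates P_{J^1} ⋯ P_{J^h} (each J^k = (j^k_1 < j^k_2)) to be non-crossing if there are no two indices p, q with j^p_1 < j^q_1 < j^p_2 < j^q_2. Then every monomial in the Plücker coordinates of X equals a linear combination of non-crossing monomials of the same multidegree, as polynomial functions of the entries of X. -/
open MvPolynomial

/-- The Plücker coordinate `P_{j₁ j₂}` of a generic 2 × n matrix, as a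
polynomial in the entries (variables indexed by `Fin 2 × Fin n`). -/
noncomputable def pluckerCoord (F : Type*) [Field F] (n : ℕ) (j : Fin n × Fin n) :
    MvPolynomial (Fin 2 × Fin n) F :=
  X (0, j.1) * X (1, j.2) - X (0, j.2) * X (1, j.1)

/-- The monomial in Plücker coordinates indexed by a list of column pairs. -/
noncomputable def pluckerMonomial (F : Type*) [Field F] (n : ℕ)
    (L : List (Fin n × Fin n)) : MvPolynomial (Fin 2 × Fin n) F :=
  (L.map (pluckerCoord F n)).prod

/-- The multiset of column indices used by a monomial in Plücker coordinates
(its multidegree/content). -/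
def pluckerCols {n : ℕ} (L : List (Fin n × Fin n)) : Multiset (Fin n) :=
  (L.map fun j => ({j.1, j.2} : Multiset (Fin n))).sum

/-- A monomial `P_{J^1} ⋯ P_{J^h}` is non-crossing if no two of its index
pairs cross, i.e. there are no `p q` with `j^p_1 < j^q_1 < j^p_2 < j^q_2`. -/
def pluckerNonCrossing {n : ℕ} (L : List (Fin n × Fin n)) : Prop :=
  ∀ p ∈ L, ∀ q ∈ L, ¬ (p.1 < q.1 ∧ q.1 < p.2 ∧ p.2 < q.2)

def crN {n : ℕ} (p q : Fin n × Fin n) : ℕ :=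
  if (p.1 : ℕ) < q.1 ∧ (q.1 : ℕ) < p.2 ∧ (p.2 : ℕ) < q.2 then 1 else 0

def scr {n : ℕ} (p q : Fin n × Fin n) : ℕ := crN p q + crN q p

def muCross {n : ℕ} (M : Multiset (Fin n × Fin n)) : ℕ :=
  (M.map fun p => (M.map fun q => crN p q).sum).sum

lemma crN_self {n : ℕ} (p : Fin n × Fin n) : crN p p = 0 := by
  simp only [crN]; split_ifs with h
  · omega
  · rfl

lemma muCross_cons {n : ℕ} (p : Fin n × Fin n) (M : Multiset (Fin n × Fin n)) :
    muCross (p ::ₘ M) = crN p p + (M.map fun q => scr p q).sum + muCross M := by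
  simp only [muCross, Multiset.map_cons, Multiset.sum_cons, scr, Multiset.sum_map_add]
  ring

lemma muCross_pair {n : ℕ} (p q : Fin n × Fin n) (T : Multiset (Fin n × Fin n)) :
    muCross (p ::ₘ q ::ₘ T) =
      crN p p + crN q q + scr p q + (T.map fun t => scr p t + scr q t).sum + muCross T := by
  rw [muCross_cons, muCross_cons, Multiset.map_cons, Multiset.sum_cons,
    Multiset.sum_map_add]
  ring

lemma scr_le₁ {n : ℕ} (a b c d : Fin n) (t : Fin n × Fin n)
    (hab : (a : ℕ) < b) (hbc : (b : ℕ) < c) (hcd : (c : ℕ) < d) (ht : (t.1 : ℕ) < t.2) :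
    scr (a, b) t + scr (c, d) t ≤ scr (a, c) t + scr (b, d) t := by
  obtain ⟨x, y⟩ := t
  simp only [scr, crN] at *
  split_ifs <;> omega

lemma scr_le₂ {n : ℕ} (a b c d : Fin n) (t : Fin n × Fin n)
    (hab : (a : ℕ) < b) (hbc : (b : ℕ) < c) (hcd : (c : ℕ) < d) (ht : (t.1 : ℕ) < t.2) :
    scr (a, d) t + scr (b, c) t ≤ scr (a, c) t + scr (b, d) t := by
  obtain ⟨x, y⟩ := t
  simp only [scr, crN] at *
  split_ifs <;> omega

lemma plucker_rel (F : Type*) [Field F] (n : ℕ) (a b c d : Fin n) :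
    pluckerCoord F n (a, c) * pluckerCoord F n (b, d) =
      pluckerCoord F n (a, b) * pluckerCoord F n (c, d) +
        pluckerCoord F n (a, d) * pluckerCoord F n (b, c) := by
  simp only [pluckerCoord]; ring

lemma cols_cons {n : ℕ} (a b : Fin n) (T : List (Fin n × Fin n)) :
    pluckerCols ((a, b) :: T) = a ::ₘ b ::ₘ pluckerCols T := by
  simp [pluckerCols, Multiset.insert_eq_cons, Multiset.cons_add, Multiset.singleton_add]

lemma mono_cons (F : Type*) [Field F] (n : ℕ) (p : Fin n × Fin n) (T : List (Fin n × Fin n)) :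
    pluckerMonomial F n (p :: T) = pluckerCoord F n p * pluckerMonomial F n T := by
  simp [pluckerMonomial]

lemma decomp (F : Type*) [Field F] {n : ℕ} (L : List (Fin n × Fin n))
    (hL : ∀ j ∈ L, j.1 < j.2) (hnc : ¬ pluckerNonCrossing L) :
    ∃ L₁ L₂ : List (Fin n × Fin n),
      pluckerMonomial F n L = pluckerMonomial F n L₁ + pluckerMonomial F n L₂ ∧
      muCross (L₁ : Multiset (Fin n × Fin n)) < muCross (L : Multiset (Fin n × Fin n)) ∧
      muCross (L₂ : Multiset (Fin n × Fin n)) < muCross (L : Multiset (Fin n × Fin n)) ∧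
      (∀ j ∈ L₁, j.1 < j.2) ∧ (∀ j ∈ L₂, j.1 < j.2) ∧
      pluckerCols L₁ = pluckerCols L ∧ pluckerCols L₂ = pluckerCols L := by
  unfold pluckerNonCrossing at hnc
  push_neg at hnc
  obtain ⟨p, hp, q, hq, h1, h2, h3⟩ := hnc
  obtain ⟨a, c⟩ := p
  obtain ⟨b, d⟩ := q
  simp only at h1 h2 h3
  have hac : a < c := hL _ hp
  have hbd : b < d := hL _ hq
  have h1' : (a : ℕ) < b := h1
  have h2' : (b : ℕ) < c := h2
  have h3' : (c : ℕ) < d := h3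
  -- permutation setting apart the two crossing pairs
  have hne : ((b, d) : Fin n × Fin n) ≠ (a, c) := by
    intro h
    rw [Prod.mk.injEq] at h
    exact absurd h.1 (by intro h'; rw [h'] at h1'; omega)
  have hp' : ((a, c) : Fin n × Fin n) ∈ (L : Multiset (Fin n × Fin n)) := Multiset.mem_coe.mpr hp
  have hq' : ((b, d) : Fin n × Fin n) ∈ (L : Multiset (Fin n × Fin n)).erase (a, c) :=
    (Multiset.mem_erase_of_ne hne).mpr (Multiset.mem_coe.mpr hq)
  obtain ⟨T, hTdef⟩ := Quotient.exists_rep (((L : Multiset (Fin n × Fin n)).erase (a, c)).erase (b, d))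
  have hM : (L : Multiset (Fin n × Fin n)) = (a, c) ::ₘ (b, d) ::ₘ (T : Multiset (Fin n × Fin n)) := by
    show _ = _ ::ₘ _ ::ₘ Quotient.mk _ T
    rw [hTdef, Multiset.cons_erase hq', Multiset.cons_erase hp']
  have hperm : L.Perm ((a, c) :: (b, d) :: T) := by
    refine Multiset.coe_eq_coe.mp ?_
    simpa using hM
  have hTmem : ∀ j ∈ T, j.1 < j.2 := by
    intro j hj
    refine hL j (Multiset.mem_coe.mp ?_)
    have : j ∈ (T : Multiset (Fin n × Fin n)) := Multiset.mem_coe.mpr hj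
    rw [show (T : Multiset (Fin n × Fin n)) = Quotient.mk _ T from rfl, hTdef] at this
    exact Multiset.mem_of_mem_erase (Multiset.mem_of_mem_erase this)
  refine ⟨(a, b) :: (c, d) :: T, (a, d) :: (b, c) :: T, ?_, ?_, ?_, ?_, ?_, ?_, ?_⟩
  · -- polynomial identity
    have hLp : pluckerMonomial F n L = pluckerMonomial F n ((a, c) :: (b, d) :: T) :=
      (hperm.map (pluckerCoord F n)).prod_eq
    rw [hLp]
    simp only [mono_cons]
    linear_combination pluckerMonomial F n T * plucker_rel F n a b c d
  · -- crossing number decreases, first resolution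
    have e1 : crN ((a, c) : Fin n × Fin n) (b, d) = 1 := if_pos ⟨h1', h2', h3'⟩
    have e2 : crN ((b, d) : Fin n × Fin n) (a, c) = 0 :=
      if_neg (show ¬((b : ℕ) < a ∧ (a : ℕ) < d ∧ (d : ℕ) < c) by omega)
    have e3 : crN ((a, b) : Fin n × Fin n) (c, d) = 0 :=
      if_neg (show ¬((a : ℕ) < c ∧ (c : ℕ) < b ∧ (b : ℕ) < d) by omega)
    have e4 : crN ((c, d) : Fin n × Fin n) (a, b) = 0 :=
      if_neg (show ¬((c : ℕ) < a ∧ (a : ℕ) < d ∧ (d : ℕ) < b) by omega)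
    have s1 : scr ((a, c) : Fin n × Fin n) (b, d) = 1 := by simp [scr, e1, e2]
    have s0 : scr ((a, b) : Fin n × Fin n) (c, d) = 0 := by simp [scr, e3, e4]
    have hsum : ((T : Multiset (Fin n × Fin n)).map fun t => scr (a, b) t + scr (c, d) t).sum ≤
        ((T : Multiset (Fin n × Fin n)).map fun t => scr (a, c) t + scr (b, d) t).sum := by
      refine Multiset.sum_map_le_sum_map _ _ fun t ht => ?_
      exact scr_le₁ a b c d t h1' h2' h3' (hTmem t (Multiset.mem_coe.mp ht))
    rw [hM]
    rw [show ((((a, b) : Fin n × Fin n) :: (c, d) :: T : List (Fin n × Fin n)) : Multiset (Fin n × Fin n))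
        = (a, b) ::ₘ (c, d) ::ₘ (T : Multiset (Fin n × Fin n)) by simp]
    rw [muCross_pair, muCross_pair]
    simp only [crN_self, s1, s0]
    omega
  · -- crossing number decreases, second resolution
    have e1 : crN ((a, c) : Fin n × Fin n) (b, d) = 1 := if_pos ⟨h1', h2', h3'⟩
    have e2 : crN ((b, d) : Fin n × Fin n) (a, c) = 0 :=
      if_neg (show ¬((b : ℕ) < a ∧ (a : ℕ) < d ∧ (d : ℕ) < c) by omega)
    have e3 : crN ((a, d) : Fin n × Fin n) (b, c) = 0 :=
      if_neg (show ¬((a : ℕ) < b ∧ (b : ℕ) < d ∧ (d : ℕ) < c) by omega)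
    have e4 : crN ((b, c) : Fin n × Fin n) (a, d) = 0 :=
      if_neg (show ¬((b : ℕ) < a ∧ (a : ℕ) < c ∧ (c : ℕ) < d) by omega)
    have s1 : scr ((a, c) : Fin n × Fin n) (b, d) = 1 := by simp [scr, e1, e2]
    have s0 : scr ((a, d) : Fin n × Fin n) (b, c) = 0 := by simp [scr, e3, e4]
    have hsum : ((T : Multiset (Fin n × Fin n)).map fun t => scr (a, d) t + scr (b, c) t).sum ≤
        ((T : Multiset (Fin n × Fin n)).map fun t => scr (a, c) t + scr (b, d) t).sum := by
      refine Multiset.sum_map_le_sum_map _ _ fun t ht => ?_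
      exact scr_le₂ a b c d t h1' h2' h3' (hTmem t (Multiset.mem_coe.mp ht))
    rw [hM]
    rw [show ((((a, d) : Fin n × Fin n) :: (b, c) :: T : List (Fin n × Fin n)) : Multiset (Fin n × Fin n))
        = (a, d) ::ₘ (b, c) ::ₘ (T : Multiset (Fin n × Fin n)) by simp]
    rw [muCross_pair, muCross_pair]
    simp only [crN_self, s1, s0]
    omega
  · -- pairs increasing, first
    intro j hj
    rcases List.mem_cons.mp hj with rfl | hj
    · exact h1
    rcases List.mem_cons.mp hj with rfl | hj
    · exact h3
    · exact hTmem j hj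
  · -- pairs increasing, second
    intro j hj
    rcases List.mem_cons.mp hj with rfl | hj
    · exact lt_trans h1 (lt_trans h2 h3)
    rcases List.mem_cons.mp hj with rfl | hj
    · exact h2
    · exact hTmem j hj
  · -- cols, first
    have : pluckerCols L = pluckerCols ((a, c) :: (b, d) :: T) :=
      (hperm.map _).sum_eq
    rw [this]
    simp only [cols_cons]
    rw [Multiset.cons_swap b c]
  · -- cols, second
    have : pluckerCols L = pluckerCols ((a, c) :: (b, d) :: T) :=
      (hperm.map _).sum_eq
    rw [this]
    simp only [cols_cons]
    rw [Multiset.cons_swap d b, Multiset.cons_swap d c, Multiset.cons_swap b c]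

lemma main_aux (F : Type*) [Field F] (n : ℕ) (N : ℕ) :
    ∀ L : List (Fin n × Fin n), muCross (L : Multiset (Fin n × Fin n)) ≤ N →
    (∀ j ∈ L, j.1 < j.2) →
    ∃ ks : List (F × List (Fin n × Fin n)),
      pluckerMonomial F n L = (ks.map fun p => p.1 • pluckerMonomial F n p.2).sum ∧
      ∀ p ∈ ks, (∀ j ∈ p.2, j.1 < j.2) ∧ pluckerNonCrossing p.2 ∧
        pluckerCols p.2 = pluckerCols L := by
  induction N with
  | zero =>
    intro L hmu hL
    by_cases hnc : pluckerNonCrossing L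
    · refine ⟨[(1, L)], by simp, ?_⟩
      intro p hp
      simp only [List.mem_singleton] at hp
      subst hp
      exact ⟨hL, hnc, rfl⟩
    · obtain ⟨L₁, L₂, -, hlt, -⟩ := decomp F L hL hnc
      omega
  | succ N ih =>
    intro L hmu hL
    by_cases hnc : pluckerNonCrossing L
    · refine ⟨[(1, L)], by simp, ?_⟩
      intro p hp
      simp only [List.mem_singleton] at hp
      subst hp
      exact ⟨hL, hnc, rfl⟩
    · obtain ⟨L₁, L₂, heq, hlt₁, hlt₂, hm₁, hm₂, hc₁, hc₂⟩ := decomp F L hL hnc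
      obtain ⟨ks₁, e₁, h₁⟩ := ih L₁ (by omega) hm₁
      obtain ⟨ks₂, e₂, h₂⟩ := ih L₂ (by omega) hm₂
      refine ⟨ks₁ ++ ks₂, ?_, ?_⟩
      · rw [heq, e₁, e₂, List.map_append, List.sum_append]
      · intro p hp
        rcases List.mem_append.mp hp with hp | hp
        · obtain ⟨x, y, z⟩ := h₁ p hp
          exact ⟨x, y, z.trans hc₁⟩
        · obtain ⟨x, y, z⟩ := h₂ p hp
          exact ⟨x, y, z.trans hc₂⟩

/-- every monomial in the Plücker coordinates of a generic
2 × n matrix over an infinite field is a linear combination of non-crossing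
monomials of the same multidegree. -/
theorem pluckerMonomial_eq_sum_noncrossing (F : Type*) [Field F] [Infinite F]
    (n : ℕ) (L : List (Fin n × Fin n)) (hL : ∀ j ∈ L, j.1 < j.2) :
    ∃ ks : List (F × List (Fin n × Fin n)),
      pluckerMonomial F n L = (ks.map fun p => p.1 • pluckerMonomial F n p.2).sum ∧
      ∀ p ∈ ks, (∀ j ∈ p.2, j.1 < j.2) ∧ pluckerNonCrossing p.2 ∧
        pluckerCols p.2 = pluckerCols L :=
  main_aux F n (muCross (L : Multiset (Fin n × Fin n))) L le_rfl hL
end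

section
/- In the polynomial ring generated by Plücker coordinates P_{ij} (1 ≤ i < j ≤ n) of the Grassmannian G(2,n), if a monomial M contains a crossing pair P_{ik} P_{jl} with i < j < k < l, then M lies in the ideal generated by the crossing products P_{ik} P_{jl} plus the Plücker ideal; equivalently, modulo the single Plücker relation P_{ik}P_{jl} − P_{ij}P_{kl} − P_{il}P_{jk} = 0, M can be rewritten as a combination of monomials each of strictly larger weight, where the weight of P_{ij} is j − i and the weight of a monomial is the product of the weights of its factors. -/
open MvPolynomial

/-- The monomial in the Plücker variables `P_J` (one polynomial variable per
pair of column indices) indexed by a list of pairs. -/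
noncomputable def pMono (n : ℕ) (L : List (Fin n × Fin n)) :
    MvPolynomial (Fin n × Fin n) ℚ :=
  (L.map X).prod

/-- The weight of a monomial: `w(P_{ab}) = b - a`, multiplied over factors. -/
def pWeight {n : ℕ} (L : List (Fin n × Fin n)) : ℕ :=
  (L.map fun p => (p.2 : ℕ) - (p.1 : ℕ)).prod

/-- if a monomial `M` in the Plücker variables contains a
crossing pair `P_{ik} P_{jl}` with `i < j < k < l`, then `M` lies in the ideal
generated by the crossing products, and modulo the single Plücker relation
`P_{ik}P_{jl} − P_{ij}P_{kl} − P_{il}P_{jk} = 0` the monomial `M` is rewritten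
as the combination `P_{ij}P_{kl}M' + P_{il}P_{jk}M'` of monomials whose
weights differ strictly from that of `M`: the crossing monomial `M` has
strictly larger weight than each of the two replacement monomials (this is the
precise weight comparison of the Plücker relation; cf. STATEMENT 10). -/
theorem crossing_monomial_rewriting (n : ℕ) (i j k l : Fin n)
    (hij : i < j) (hjk : j < k) (hkl : k < l)
    (M' : List (Fin n × Fin n)) (hM' : ∀ p ∈ M', p.1 < p.2) :
    pMono n ((i, k) :: (j, l) :: M') ∈
        Ideal.span {f : MvPolynomial (Fin n × Fin n) ℚ |
          ∃ p q : Fin n × Fin n, p.1 < q.1 ∧ q.1 < p.2 ∧ p.2 < q.2 ∧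
            f = X p * X q} ∧
    pMono n ((i, k) :: (j, l) :: M') - pMono n ((i, j) :: (k, l) :: M') -
        pMono n ((i, l) :: (j, k) :: M') ∈
      Ideal.span {X (i, k) * X (j, l) - X (i, j) * X (k, l) -
        X (i, l) * X (j, k)} ∧
    pWeight ((i, j) :: (k, l) :: M') < pWeight ((i, k) :: (j, l) :: M') ∧
    pWeight ((i, l) :: (j, k) :: M') < pWeight ((i, k) :: (j, l) :: M') := by

  have hpm : ∀ a b : Fin n × Fin n,
      pMono n (a :: b :: M') = X a * X b * pMono n M' := by
    intro a b
    simp [pMono, mul_assoc]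
  have hW : 0 < pWeight M' := by
    unfold pWeight
    apply List.prod_pos
    intro x hx
    simp only [List.mem_map] at hx
    obtain ⟨p, hp, rfl⟩ := hx
    exact Nat.sub_pos_of_lt (hM' p hp)
  refine ⟨?_, ?_, ?_, ?_⟩
  · rw [hpm]
    exact Ideal.mul_mem_right _ _ (Ideal.subset_span
      ⟨(i, k), (j, l), hij, hjk, hkl, rfl⟩)
  · rw [hpm, hpm, hpm]
    have : X (i, k) * X (j, l) * pMono n M' - X (i, j) * X (k, l) * pMono n M' -
        X (i, l) * X (j, k) * pMono n M' =
        (X (i, k) * X (j, l) - X (i, j) * X (k, l) - X (i, l) * X (j, k)) *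
          pMono n M' := by ring
    rw [this]
    exact Ideal.mul_mem_right _ _ (Ideal.subset_span rfl)
  all_goals
  · simp only [pWeight, List.map_cons, List.prod_cons, ← mul_assoc]
    apply Nat.mul_lt_mul_of_lt_of_le _ le_rfl hW
    have h1 := hij; have h2 := hjk; have h3 := hkl
    simp only [Fin.lt_def] at h1 h2 h3
    zify [h1.le, h2.le, h3.le, (h1.trans h2).le, (h2.trans h3).le,
      (h1.trans (h2.trans h3)).le]
    nlinarith [h1, h2, h3]
end
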